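/- Let d be a positive rational with √d irrational, and let a, b ∈ ℚ[√d] with a > 0, b > 0, ā > 0 and b̄ < 0. Then for every q ∈ ℚ and every M > 0 there exists x ∈ ℚ[√d] such that: h(x) = q; x > M; and x = m·a + n·b for some positive rationals m, n. -/

import Mathlib

noncomputable section

set_option maxHeartbeats 1000000

/-- `G(x) = (x-1)/(x+1)`. -/
def Gfun (x : ℝ) : ℝ := (x - 1) / (x + 1)
/-- Membership in `ℚ[√d] = {p + q√d : p, q ∈ ℚ}` as a subset of `ℝ`. -/
def memQd (d : ℚ) (x : ℝ) : Prop := ∃ p q : ℚ, x = p + q * Real.sqrt d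

/-- For `a, b ∈ ℚ[√d]` with `a, b > 0`, `ā > 0`, `b̄ < 0`, and every `q ∈ ℚ`, `M > 0`,
there exists `x ∈ ℚ[√d]` with `h(x) = q`, `x > M`, and `x = m·a + n·b` for some positive
rationals `m, n`. -/
theorem statement7 (d : ℚ) (hd : 0 < d) (hirr : Irrational (Real.sqrt d))
    (pa qa pb qb : ℚ) (a b : ℝ)
    (hae : a = pa + qa * Real.sqrt d) (hbe : b = pb + qb * Real.sqrt d)
    (ha : 0 < a) (hb : 0 < b)
    (habar : 0 < (pa : ℝ) - qa * Real.sqrt d)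
    (hbbar : (pb : ℝ) - qb * Real.sqrt d < 0)
    (q : ℚ) (M : ℝ) (hM : 0 < M) :
    ∃ x : ℝ, memQd d x ∧
      (∃ p' q' : ℚ, Gfun x = (p' : ℝ) + q' * Real.sqrt d ∧ q' ≠ 0 ∧ p' / q' = q) ∧
      M < x ∧
      ∃ m n : ℚ, 0 < m ∧ 0 < n ∧ x = m * a + n * b := by
  set s := Real.sqrt d with hsdef
  have hdR : (0:ℝ) < (d:ℝ) := by exact_mod_cast hd
  have hs0 : 0 < s := by rw [hsdef]; exact Real.sqrt_pos.mpr hdR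
  have hs2 : s ^ 2 = (d:ℝ) := by rw [hsdef]; exact Real.sq_sqrt hdR.le
  have hqs : ((q:ℝ)) ≠ s := fun h => hirr ⟨q, h.trans hsdef⟩
  clear_value s
  set c := |(q:ℝ) - s| with hcdef
  have hc0 : 0 < c := abs_pos.mpr (sub_ne_zero.mpr hqs)
  set C0 : ℝ := 1 + 2 * (c + 1) / s with hC0def
  have hC0ge1 : 1 ≤ C0 := by
    rw [hC0def]
    have : 0 < 2 * (c + 1) / s := by positivity
    linarith
  have hC0pos : 0 < C0 := by linarith
  have hC0s : C0 * s = s + 2 * (c + 1) := by rw [hC0def]; field_simp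
  have hbbar' : 0 < -((pb:ℝ) - qb * s) := by linarith
  set K1 : ℝ := max (M / s) (max (a * C0 / (((pa:ℝ) - qa * s) * s))
      (b * C0 / ((-((pb:ℝ) - qb * s)) * s))) with hK1def
  have hK1pos : 0 < K1 := lt_of_lt_of_le (div_pos hM hs0) (le_max_left _ _)
  set ε : ℝ := min s (min (c / 2) (c / (3 * (K1 + 1) * s))) with hεdef
  have hεpos : 0 < ε := by
    rw [hεdef]
    have h1 : 0 < c / (3 * (K1 + 1) * s) := by positivity
    have h2 : 0 < c / 2 := by positivity
    exact lt_min hs0 (lt_min h2 h1)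
  have hε1 : ε ≤ s := min_le_left _ _
  have hε2 : ε ≤ c / 2 := le_trans (min_le_right _ _) (min_le_left _ _)
  have hε3 : ε ≤ c / (3 * (K1 + 1) * s) := le_trans (min_le_right _ _) (min_le_right _ _)
  have hε3' : ε * (3 * (K1 + 1) * s) ≤ c := (le_div_iff₀ (by positivity)).mp hε3
  clear_value c C0 K1 ε
  -- choose the rational t
  obtain ⟨t, ht0, htne, habsq, hQbig⟩ :
      ∃ t : ℚ, 0 < (t:ℝ) ∧ (t:ℝ) ≠ s ∧ |(q:ℝ) - (t:ℝ)| ≤ c + 1 ∧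
        K1 + 1 < 2 * ((q:ℝ) - t) / ((t:ℝ) ^ 2 - d) := by
    rcases lt_or_gt_of_ne hqs with hlt | hgt
    · -- q < s : pick t ∈ (max q (s-ε), s)
      have hcq : c = s - (q:ℝ) := by
        rw [hcdef, abs_of_neg (by linarith)]; ring
      obtain ⟨t, ht1, ht2⟩ := exists_rat_btwn (show max ((q:ℝ)) (s - ε) < s from
        max_lt hlt (by linarith))
      have ht1a : (q:ℝ) < t := lt_of_le_of_lt (le_max_left _ _) ht1
      have ht1b : s - ε < t := lt_of_le_of_lt (le_max_right _ _) ht1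
      have ht0 : 0 < (t:ℝ) := by linarith
      refine ⟨t, ht0, ne_of_lt ht2, ?_, ?_⟩
      · rw [abs_of_neg (by linarith)]
        linarith
      · have hden : (t:ℝ) ^ 2 - (d:ℝ) < 0 := by nlinarith
        have hrw : 2 * ((q:ℝ) - t) / ((t:ℝ) ^ 2 - (d:ℝ))
            = 2 * ((t:ℝ) - q) / ((d:ℝ) - (t:ℝ) ^ 2) := by
          rw [show (t:ℝ) ^ 2 - (d:ℝ) = -((d:ℝ) - (t:ℝ) ^ 2) by ring,
            show 2 * ((q:ℝ) - t) = -(2 * ((t:ℝ) - q)) by ring, neg_div_neg_eq]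
        rw [hrw, lt_div_iff₀ (by linarith)]
        have hK1' : (0:ℝ) < K1 + 1 := by linarith
        have hfact : (d:ℝ) - (t:ℝ) ^ 2 = (s - t) * (s + t) := by linear_combination -hs2
        have h1a : (s - (t:ℝ)) * (s + t) < ε * (s + t) :=
          mul_lt_mul_of_pos_right (by linarith) (by linarith)
        have h1b : ε * (s + (t:ℝ)) < ε * (2 * s) :=
          mul_lt_mul_of_pos_left (by linarith) hεpos
        have h2 : (K1 + 1) * ((d:ℝ) - t ^ 2) < (K1 + 1) * (ε * (2 * s)) := by
          apply mul_lt_mul_of_pos_left _ hK1'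
          rw [hfact]; linarith
        have h3 : (K1 + 1) * (ε * (2 * s)) ≤ 2 / 3 * c := by nlinarith [hε3']
        have h4 : c < 2 * ((t:ℝ) - q) := by linarith
        linarith
    · -- s < q : pick t ∈ (s, min q (s+ε))
      have hcq : c = (q:ℝ) - s := by
        rw [hcdef, abs_of_pos (by linarith)]
      obtain ⟨t, ht1, ht2⟩ := exists_rat_btwn (show s < min ((q:ℝ)) (s + ε) from
        lt_min hgt (by linarith))
      have ht2a : (t:ℝ) < q := lt_of_lt_of_le ht2 (min_le_left _ _)
      have ht2b : (t:ℝ) < s + ε := lt_of_lt_of_le ht2 (min_le_right _ _)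
      have ht0 : 0 < (t:ℝ) := by linarith
      refine ⟨t, ht0, ne_of_gt ht1, ?_, ?_⟩
      · rw [abs_of_pos (by linarith)]
        linarith
      · have hden : (0:ℝ) < (t:ℝ) ^ 2 - (d:ℝ) := by nlinarith
        rw [lt_div_iff₀ hden]
        have hK1' : (0:ℝ) < K1 + 1 := by linarith
        have hfact : (t:ℝ) ^ 2 - (d:ℝ) = ((t:ℝ) - s) * ((t:ℝ) + s) := by
          linear_combination hs2
        have h1a : ((t:ℝ) - s) * ((t:ℝ) + s) < ε * ((t:ℝ) + s) :=
          mul_lt_mul_of_pos_right (by linarith) (by linarith)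
        have h1b : ε * ((t:ℝ) + s) < ε * (3 * s) :=
          mul_lt_mul_of_pos_left (by linarith) hεpos
        have h2 : (K1 + 1) * ((t:ℝ) ^ 2 - d) < (K1 + 1) * (ε * (3 * s)) := by
          apply mul_lt_mul_of_pos_left _ hK1'
          rw [hfact]; linarith
        have h3 : (K1 + 1) * (ε * (3 * s)) ≤ c := by nlinarith [hε3']
        have h4 : c < 2 * ((q:ℝ) - t) := by linarith
        linarith
  -- t² ≠ d
  have ht2d : (t:ℝ) ^ 2 ≠ (d:ℝ) := by
    intro h
    apply htne
    have hst : s = (t:ℝ) := by rw [hsdef, ← h, Real.sqrt_sq ht0.le]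
    exact hst.symm
  have htq2 : t ^ 2 ≠ d := by
    intro h
    exact ht2d (by exact_mod_cast congrArg (fun r : ℚ => (r:ℝ)) h)
  have htd : t ^ 2 - d ≠ 0 := sub_ne_zero.mpr htq2
  set Q : ℚ := 2 * (q - t) / (t ^ 2 - d) with hQdef
  set P : ℚ := 1 + t * Q with hPdef
  clear_value Q P
  have hQcast : (Q:ℝ) = 2 * ((q:ℝ) - t) / ((t:ℝ) ^ 2 - d) := by
    rw [hQdef]; push_cast; ring
  have hQgt : K1 + 1 < (Q:ℝ) := by rw [hQcast]; exact hQbig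
  have hQposR : 0 < (Q:ℝ) := by linarith
  have hQpos : 0 < Q := by exact_mod_cast hQposR
  have hQne : Q ≠ 0 := ne_of_gt hQpos
  have hQd : (t ^ 2 - d) * Q = 2 * (q - t) := by rw [hQdef]; field_simp
  have hPQ : P ^ 2 - d * Q ^ 2 = 1 + 2 * q * Q := by
    rw [hPdef]; linear_combination Q * hQd
  have hPcast : (P:ℝ) = 1 + (t:ℝ) * Q := by rw [hPdef]; push_cast; ring
  have hQdR : ((t:ℝ) ^ 2 - d) * (Q:ℝ) = 2 * ((q:ℝ) - t) := by exact_mod_cast hQd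
  have hPQR : (P:ℝ) ^ 2 - s ^ 2 * (Q:ℝ) ^ 2 = 1 + 2 * (q:ℝ) * Q := by
    have h2 : (P:ℝ) ^ 2 - (d:ℝ) * (Q:ℝ) ^ 2 = 1 + 2 * (q:ℝ) * Q := by exact_mod_cast hPQ
    rw [hs2]; exact h2
  set x : ℝ := (P:ℝ) + Q * s with hxdef
  set y : ℝ := (P:ℝ) - Q * s with hydef
  clear_value x y
  -- size of x
  have hxgt : (Q:ℝ) * s < x := by
    rw [hxdef, hPcast]
    nlinarith [mul_pos ht0 hQposR]
  have hexp : (K1 + 1) * s = K1 * s + s := by ring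
  have hxK : K1 * s + s < x := by
    have := mul_lt_mul_of_pos_right hQgt hs0
    nlinarith
  have hxM : M < x := by
    have h1 : M / s ≤ K1 := by rw [hK1def]; exact le_max_left _ _
    have h2 : M ≤ K1 * s := by
      rw [div_le_iff₀ hs0] at h1; linarith
    linarith
  have hxpos : 0 < x := by nlinarith [mul_pos hQposR hs0]
  -- bound on y = conjugate of x
  have hkey : (y - 1) * ((t:ℝ) + s) = 2 * ((q:ℝ) - t) := by
    rw [hydef, hPcast]; linear_combination hQdR - (Q:ℝ) * hs2
  have habs1 : (q:ℝ) - t ≤ c + 1 := (abs_le.mp habsq).2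
  have habs2 : -(c + 1) ≤ (q:ℝ) - t := (abs_le.mp habsq).1
  have hyup : y ≤ C0 := by
    by_contra hcon
    push_neg at hcon
    have h0 : (0:ℝ) ≤ y - 1 := by linarith
    have h2 : (y - 1) * s ≤ (y - 1) * ((t:ℝ) + s) :=
      mul_le_mul_of_nonneg_left (by linarith) h0
    have h1 : (C0 - 1) * s < (y - 1) * s :=
      mul_lt_mul_of_pos_right (by linarith) hs0
    have h3 : (C0 - 1) * s = C0 * s - s := by ring
    linarith [hkey, habs1, hC0s]
  have hylow : 2 - C0 ≤ y := by
    by_contra hcon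
    push_neg at hcon
    have h0 : y - 1 ≤ 0 := by linarith
    have h2 : (y - 1) * ((t:ℝ) + s) ≤ (y - 1) * s :=
      mul_le_mul_of_nonpos_left (by linarith) h0
    have h1 : (y - 1) * s < (1 - C0) * s :=
      mul_lt_mul_of_pos_right (by linarith) hs0
    have h3 : (1 - C0) * s = s - C0 * s := by ring
    linarith [hkey, habs2, hC0s]
  -- thresholds from K1
  have hxa : a * C0 < ((pa:ℝ) - qa * s) * x := by
    have h1 : a * C0 / (((pa:ℝ) - qa * s) * s) ≤ K1 := by
      rw [hK1def]; exact le_trans (le_max_left _ _) (le_max_right _ _)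
    have h2 : a * C0 ≤ K1 * (((pa:ℝ) - qa * s) * s) := by
      rw [div_le_iff₀ (mul_pos habar hs0)] at h1; linarith
    have h3 : ((pa:ℝ) - qa * s) * (K1 * s + s) < ((pa:ℝ) - qa * s) * x :=
      mul_lt_mul_of_pos_left hxK habar
    have h4 : ((pa:ℝ) - qa * s) * (K1 * s + s)
        = K1 * (((pa:ℝ) - qa * s) * s) + ((pa:ℝ) - qa * s) * s := by ring
    have h5 : 0 < ((pa:ℝ) - qa * s) * s := mul_pos habar hs0
    linarith
  have hxb : b * C0 < (-((pb:ℝ) - qb * s)) * x := by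
    have h1 : b * C0 / ((-((pb:ℝ) - qb * s)) * s) ≤ K1 := by
      rw [hK1def]; exact le_trans (le_max_right _ _) (le_max_right _ _)
    have h2 : b * C0 ≤ K1 * ((-((pb:ℝ) - qb * s)) * s) := by
      rw [div_le_iff₀ (mul_pos hbbar' hs0)] at h1; linarith
    have h3 : (-((pb:ℝ) - qb * s)) * (K1 * s + s) < (-((pb:ℝ) - qb * s)) * x :=
      mul_lt_mul_of_pos_left hxK hbbar'
    have h4 : (-((pb:ℝ) - qb * s)) * (K1 * s + s)
        = K1 * ((-((pb:ℝ) - qb * s)) * s) + (-((pb:ℝ) - qb * s)) * s := by ring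
    have h5 : 0 < (-((pb:ℝ) - qb * s)) * s := mul_pos hbbar' hs0
    linarith
  -- the rational coefficients m, n
  set det : ℚ := pa * qb - qa * pb with hdetdef
  have hdet : det ≠ 0 := by
    intro h0
    rw [hdetdef] at h0
    have h0R : (pa:ℝ) * qb - (qa:ℝ) * pb = 0 := by exact_mod_cast h0
    have heq : a * ((pb:ℝ) - qb * s) = ((pa:ℝ) - qa * s) * b := by
      rw [hae, hbe]; linear_combination (-2 * s) * h0R
    linarith [heq, mul_pos habar hb, mul_pos ha hbbar']
  set m : ℚ := (P * qb - Q * pb) / det with hmdef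
  set n : ℚ := (pa * Q - qa * P) / det with hndef
  clear_value det m n
  have hm1 : m * pa + n * pb = P := by
    rw [hmdef, hndef, hdetdef]
    rw [hdetdef] at hdet
    rw [div_mul_eq_mul_div, div_mul_eq_mul_div, ← add_div, div_eq_iff hdet]
    ring
  have hm2 : m * qa + n * qb = Q := by
    rw [hmdef, hndef, hdetdef]
    rw [hdetdef] at hdet
    rw [div_mul_eq_mul_div, div_mul_eq_mul_div, ← add_div, div_eq_iff hdet]
    ring
  have hm1R : (m:ℝ) * pa + (n:ℝ) * pb = P := by exact_mod_cast hm1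
  have hm2R : (m:ℝ) * qa + (n:ℝ) * qb = Q := by exact_mod_cast hm2
  have hxmn : x = (m:ℝ) * a + (n:ℝ) * b := by
    rw [hxdef, hae, hbe]; linear_combination (-1 : ℝ) * hm1R - s * hm2R
  have hymn : y = (m:ℝ) * ((pa:ℝ) - qa * s) + (n:ℝ) * ((pb:ℝ) - qb * s) := by
    rw [hydef]; linear_combination (-1 : ℝ) * hm1R + s * hm2R
  have hDneg : a * ((pb:ℝ) - qb * s) - ((pa:ℝ) - qa * s) * b < 0 := by
    linarith [mul_pos ha hbbar', mul_pos habar hb]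
  have hmident : (m:ℝ) * (a * ((pb:ℝ) - qb * s) - ((pa:ℝ) - qa * s) * b)
      = x * ((pb:ℝ) - qb * s) - y * b := by
    linear_combination (-((pb:ℝ) - qb * s)) * hxmn + b * hymn
  have hmnum : x * ((pb:ℝ) - qb * s) - y * b < 0 := by
    linarith [hxb, hb,
      mul_nonneg (show (0:ℝ) ≤ y - (2 - C0) by linarith) hb.le]
  have hmposR : 0 < (m:ℝ) := by
    by_contra hcon
    push_neg at hcon
    have h6 := mul_nonneg (neg_nonneg.mpr hcon) (neg_nonneg.mpr hDneg.le)
    rw [neg_mul_neg] at h6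
    linarith [hmident, hmnum]
  have hnident : (n:ℝ) * (a * ((pb:ℝ) - qb * s) - ((pa:ℝ) - qa * s) * b)
      = a * y - ((pa:ℝ) - qa * s) * x := by
    linear_combination (-a) * hymn + ((pa:ℝ) - qa * s) * hxmn
  have hnnum : a * y - ((pa:ℝ) - qa * s) * x < 0 := by
    linarith [hxa, mul_nonneg (show (0:ℝ) ≤ C0 - y by linarith) ha.le]
  have hnposR : 0 < (n:ℝ) := by
    by_contra hcon
    push_neg at hcon
    have h6 := mul_nonneg (neg_nonneg.mpr hcon) (neg_nonneg.mpr hDneg.le)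
    rw [neg_mul_neg] at h6
    linarith [hnident, hnnum]
  -- the value of Gfun at x
  set Δ : ℚ := (P + 1) ^ 2 - d * Q ^ 2 with hΔdef
  clear_value Δ
  have hΔR : ((Δ : ℚ) : ℝ) = ((P:ℝ) + 1) ^ 2 - s ^ 2 * (Q:ℝ) ^ 2 := by
    rw [hΔdef]; push_cast; rw [← hs2]
  have hΔne : Δ ≠ 0 := by
    intro h0
    have h1 : (P + 1) ^ 2 = d * Q ^ 2 := by rw [hΔdef] at h0; linarith
    have hP1 : ((P + 1) / Q) ^ 2 = d := by
      rw [div_pow, h1, mul_div_assoc, div_self (pow_ne_zero 2 hQne), mul_one]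
    apply hirr
    refine ⟨|(P + 1) / Q|, ?_⟩
    have hca : ((|(P + 1) / Q| : ℚ) : ℝ) = |(((P + 1) / Q : ℚ) : ℝ)| := by push_cast; rfl
    rw [hca, ← Real.sqrt_sq_eq_abs, hsdef]
    congr 1
    exact_mod_cast hP1
  have hΔRne : ((P:ℝ) + 1) ^ 2 - s ^ 2 * (Q:ℝ) ^ 2 ≠ 0 := by
    rw [← hΔR]; exact_mod_cast hΔne
  have hx1 : x + 1 ≠ 0 := ne_of_gt (by linarith)
  set p' : ℚ := 2 * q * Q / Δ with hp'def
  set q' : ℚ := 2 * Q / Δ with hq'def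
  clear_value p' q'
  have hq'ne : q' ≠ 0 := by
    rw [hq'def]
    exact div_ne_zero (mul_ne_zero two_ne_zero hQne) hΔne
  have hpq' : p' / q' = q := by
    rw [hp'def, hq'def]
    field_simp
  have hp'c : (p':ℝ) = 2 * q * Q / (((P:ℝ) + 1) ^ 2 - s ^ 2 * (Q:ℝ) ^ 2) := by
    rw [hp'def, ← hΔR]; push_cast; ring
  have hq'c : (q':ℝ) = 2 * Q / (((P:ℝ) + 1) ^ 2 - s ^ 2 * (Q:ℝ) ^ 2) := by
    rw [hq'def, ← hΔR]; push_cast; ring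
  have key : (x - 1) * (((P:ℝ) + 1) ^ 2 - s ^ 2 * (Q:ℝ) ^ 2)
      = (2 * q * Q + 2 * Q * s) * (x + 1) := by
    rw [hxdef]; linear_combination ((P:ℝ) + Q * s + 1) * hPQR
  have hmul : ((p':ℝ) + (q':ℝ) * s) * (x + 1) = x - 1 := by
    rw [hp'c, hq'c, div_mul_eq_mul_div, ← add_div, div_mul_eq_mul_div,
      div_eq_iff hΔRne]
    linear_combination -key
  have hG : Gfun x = (p':ℝ) + (q':ℝ) * s := by
    unfold Gfun
    rw [← hmul, mul_div_cancel_right₀ _ hx1]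
  refine ⟨x, ⟨P, Q, by rw [hxdef, hsdef]⟩,
    ⟨p', q', hG, hq'ne, hpq'⟩, hxM,
    m, n, by exact_mod_cast hmposR, by exact_mod_cast hnposR, hxmn⟩

end
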